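/- Let C and A be Polish abelian groups, let c : C × C → A be a continuous symmetric 2-cocycle, and let t : C → A be a function with δt = c. If t is Borel measurable, then t is continuous (and hence c is the coboundary of a continuous function). -/

import Mathlib

open Filter Set Topology Pointwise

/-- If a set is residual-equivalent to a nonempty open set in a Baire space, it is nonempty. -/
private lemma nonempty_of_residualEq_open {G : Type*} [TopologicalSpace G] [BaireSpace G]
    {S U : Set G} (h : S =ᶠ[residual G] U) (hU : IsOpen U) (hne : U.Nonempty) : S.Nonempty := by
  have hW : {x | (x ∈ S) = (x ∈ U)} ∈ residual G := h
  have hd := dense_of_mem_residual hW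
  obtain ⟨x, hxW, hxU⟩ := hd.exists_mem_open hU hne
  exact ⟨x, by rw [show (x ∈ S) = (x ∈ U) from hxW]; exact hxU⟩

/-- **Pettis' theorem** (category version of Steinhaus): if `S` is a Baire measurable,
non-meager subset of a Baire topological additive group, then `S - S` is a neighborhood
of `0`. -/
private lemma pettis_nhds {G : Type*} [AddCommGroup G] [TopologicalSpace G]
    [IsTopologicalAddGroup G] [BaireSpace G] {S : Set G}
    (hS : BaireMeasurableSet S) (hmeag : ¬ IsMeagre S) : S - S ∈ 𝓝 (0 : G) := by
  obtain ⟨U, hUo, hSU⟩ := hS.residualEq_isOpen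
  have hUne : U.Nonempty := by
    rcases U.eq_empty_or_nonempty with rfl | h
    · exfalso
      apply hmeag
      rw [IsMeagre]
      have : ∀ᶠ x in residual G, x ∈ Sᶜ := by
        filter_upwards [hSU] with x hx
        intro hxS
        exact cast hx hxS
      exact this
    · exact h
  obtain ⟨u, hu⟩ := hUne
  have key : U - U ⊆ S - S := by
    intro x hx
    rw [Set.mem_sub] at hx
    obtain ⟨a, ha, b, hb, rfl⟩ := hx
    set x := a - b with hxab
    have htend : Tendsto (fun y : G => y - x) (residual G) (residual G) :=
      ((Homeomorph.subRight x).residual_map_eq).le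
    have h2 : ((fun y : G => y - x) ⁻¹' S) =ᶠ[residual G] ((fun y : G => y - x) ⁻¹' U) :=
      hSU.comp_tendsto htend
    have h3 := hSU.inter h2
    have hTo : IsOpen (U ∩ (fun y : G => y - x) ⁻¹' U) :=
      hUo.inter (hUo.preimage (continuous_id.sub continuous_const))
    have hTne : (U ∩ (fun y : G => y - x) ⁻¹' U).Nonempty := by
      refine ⟨a, ha, ?_⟩
      show a - x ∈ U
      rw [hxab, sub_sub_cancel]
      exact hb
    obtain ⟨y, hyS, hyS'⟩ := nonempty_of_residualEq_open h3 hTo hTne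
    rw [Set.mem_sub]
    exact ⟨y, hyS, y - x, hyS', by rw [sub_sub_cancel]⟩
  have hopen : IsOpen (U - U) := hUo.sub_right
  exact Filter.mem_of_superset
    (hopen.mem_nhds (by rw [← sub_self u]; exact Set.sub_mem_sub hu hu)) key

/-- Let `C` and `A` be Polish abelian groups, let `c : C × C → A` be a
continuous symmetric 2-cocycle, and let `t : C → A` be a function with `δt = c` (where
`δt (x, y) = t x + t y - t (x + y)`). If `t` is Borel measurable, then `t` is continuous. -/
theorem borel_coboundary_is_continuous
    {C A : Type*} [AddCommGroup C] [TopologicalSpace C] [IsTopologicalAddGroup C] [PolishSpace C]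
    [MeasurableSpace C] [BorelSpace C]
    [AddCommGroup A] [TopologicalSpace A] [IsTopologicalAddGroup A] [PolishSpace A]
    [MeasurableSpace A] [BorelSpace A]
    (c : C × C → A) (hc : Continuous c)
    (hcocycle : ∀ x y z : C, c (x + y, z) + c (x, y) = c (x, y + z) + c (y, z))
    (hsymm : ∀ x y : C, c (x, y) = c (y, x))
    (hzero : ∀ x : C, c (0, x) = 0)
    (t : C → A) (ht : ∀ x y : C, c (x, y) = t x + t y - t (x + y))
    (htBorel : Measurable t) :
    Continuous t := by
  haveI : Nonempty C := ⟨0⟩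
  letI := TopologicalSpace.upgradeIsCompletelyMetrizable C
  have ht0 : t 0 = 0 := by
    have h := ht 0 0
    rw [add_zero, hzero 0] at h
    have := h.symm
    simpa using this
  -- Key identity: `t (x - y) = t x - t y + (c (y, -y) - c (x, -y))`.
  have hkey : ∀ x y : C, t (x - y) = t x - t y + (c (y, -y) - c (x, -y)) := by
    intro x y
    have h1 := ht x (-y)
    have h2 := ht y (-y)
    rw [add_neg_cancel, ht0] at h2
    rw [sub_eq_add_neg x y, h1, h2]
    abel
  -- Continuity at 0.
  have hcont0 : Filter.Tendsto t (𝓝 (0 : C)) (𝓝 (0 : A)) := by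
    rw [Filter.tendsto_def]
    intro V hV
    obtain ⟨V₁, hV₁o, hV₁0, hV₁⟩ := exists_open_nhds_zero_add_subset hV
    obtain ⟨V₂, hV₂o, hV₂0, hV₂⟩ := exists_open_nhds_zero_add_subset (hV₁o.mem_nhds hV₁0)
    set W : Set A := V₂ ∩ (-V₂) with hWdef
    have hWo : IsOpen W := hV₂o.inter hV₂o.neg
    have hW0 : (0 : A) ∈ W := ⟨hV₂0, by simpa using hV₂0⟩
    have hWsub : ∀ a b : A, a ∈ W → b ∈ W → a - b ∈ V₁ := by
      intro a b ha hb
      have hb' : -b ∈ V₂ := Set.mem_neg.1 hb.2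
      rw [sub_eq_add_neg]
      exact hV₂ (Set.add_mem_add ha.1 hb')
    set ψ : C × C → A := fun q => c (q.2, -q.2) - c (q.1, -q.2) with hψdef
    have hψc : Continuous ψ :=
      (hc.comp (continuous_snd.prodMk continuous_snd.neg)).sub
        (hc.comp (continuous_fst.prodMk continuous_snd.neg))
    set Z : Set (C × C) := ψ ⁻¹' V₁ with hZdef
    have hZo : IsOpen Z := hV₁o.preimage hψc
    have hZdiag : ∀ x : C, (x, x) ∈ Z := by
      intro x
      show ψ (x, x) ∈ V₁
      simp only [hψdef]
      rw [sub_self]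
      exact hV₁0
    obtain ⟨B, hBc, _, hBbasis⟩ := TopologicalSpace.exists_countable_basis C
    obtain ⟨D, hDc, hDd⟩ := TopologicalSpace.exists_countable_dense A
    set T : Set (A × Set C) := {p | p.1 ∈ D ∧ p.2 ∈ B ∧ p.2 ×ˢ p.2 ⊆ Z} with hTdef
    have hTc : T.Countable := (hDc.prod hBc).mono fun p hp => Set.mem_prod.2 ⟨hp.1, hp.2.1⟩
    set F : A × Set C → Set C := fun p => {x | t x - p.1 ∈ W} ∩ p.2 with hFdef
    have hcover : ⋃ p ∈ T, F p = Set.univ := by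
      ext x
      simp only [Set.mem_iUnion, Set.mem_univ, iff_true]
      obtain ⟨u, v, hu, hxu, hv, hxv, huv⟩ := mem_nhds_prod_iff'.1 (hZo.mem_nhds (hZdiag x))
      obtain ⟨b, hbB, hxb, hbsub⟩ := hBbasis.exists_subset_of_mem_open (⟨hxu, hxv⟩ : x ∈ u ∩ v)
        (hu.inter hv)
      have hop : IsOpen ((fun d => t x - d) ⁻¹' W) :=
        hWo.preimage (continuous_const.sub continuous_id)
      have hne : ((fun d => t x - d) ⁻¹' W).Nonempty := ⟨t x, by simpa using hW0⟩
      obtain ⟨d, hdD, hdW⟩ := hDd.exists_mem_open hop hne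
      refine ⟨(d, b), ⟨hdD, hbB, ?_⟩, hdW, hxb⟩
      intro q hq
      exact huv ⟨(hbsub hq.1).1, (hbsub hq.2).2⟩
    have hex : ∃ p ∈ T, ¬ IsMeagre (F p) := by
      by_contra hcon
      push_neg at hcon
      have hmeag : IsMeagre (⋃ p ∈ T, F p) := by
        rw [IsMeagre, Set.compl_iUnion₂]
        exact (countable_bInter_mem hTc).2 fun p hp => hcon p hp
      rw [hcover, IsMeagre, Set.compl_univ] at hmeag
      have := dense_of_mem_residual hmeag
      simpa using this.nonempty
    obtain ⟨p, hpT, hpmeag⟩ := hex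
    have hmeas : MeasurableSet (F p) := by
      have h1 : MeasurableSet (t ⁻¹' ((fun a => a - p.1) ⁻¹' W)) :=
        htBorel ((hWo.preimage (continuous_id.sub continuous_const)).measurableSet)
      exact h1.inter (hBbasis.isOpen hpT.2.1).measurableSet
    have hnhds : F p - F p ∈ 𝓝 (0 : C) := pettis_nhds hmeas.baireMeasurableSet hpmeag
    refine Filter.mem_of_superset hnhds ?_
    intro h hh
    rw [Set.mem_sub] at hh
    obtain ⟨x, hx, y, hy, rfl⟩ := hh
    show t (x - y) ∈ V
    rw [hkey x y]
    have h1 : t x - t y ∈ V₁ := by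
      have := hWsub _ _ hx.1 hy.1
      rwa [sub_sub_sub_cancel_right] at this
    have h2 : c (y, -y) - c (x, -y) ∈ V₁ := hpT.2.2 (Set.mk_mem_prod hx.2 hy.2)
    exact hV₁ (Set.add_mem_add h1 h2)
  -- Global continuity from continuity at 0.
  rw [continuous_iff_continuousAt]
  intro x₀
  have hsub : Filter.Tendsto (fun x => x - x₀) (𝓝 x₀) (𝓝 (0 : C)) := by
    have : Filter.Tendsto (fun x : C => x - x₀) (𝓝 x₀) (𝓝 (x₀ - x₀)) :=
      (continuous_id.sub (continuous_const : Continuous fun _ : C => x₀)).tendsto x₀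
    simpa using this
  have h1 : Filter.Tendsto (fun x => t (x - x₀)) (𝓝 x₀) (𝓝 (0 : A)) := hcont0.comp hsub
  have h2 : Filter.Tendsto (fun x => c (x₀, -x₀) - c (x, -x₀)) (𝓝 x₀) (𝓝 (0 : A)) := by
    have hcc : Continuous fun x : C => c (x, -x₀) :=
      hc.comp (continuous_id.prodMk continuous_const)
    have := (tendsto_const_nhds : Filter.Tendsto (fun _ : C => c (x₀, -x₀)) (𝓝 x₀)
      (𝓝 (c (x₀, -x₀)))).sub (hcc.tendsto x₀)
    simpa using this
  have h3 : Filter.Tendsto (fun x => t (x - x₀) - (c (x₀, -x₀) - c (x, -x₀)) + t x₀)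
      (𝓝 x₀) (𝓝 (t x₀)) := by
    simpa using (h1.sub h2).add (tendsto_const_nhds : Filter.Tendsto _ (𝓝 x₀) (𝓝 (t x₀)))
  have heq : ∀ x, t x = t (x - x₀) - (c (x₀, -x₀) - c (x, -x₀)) + t x₀ := by
    intro x
    rw [hkey x x₀]
    abel
  exact h3.congr fun x => (heq x).symm
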